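/- The function f : ℝ → ℝ given by f(x) = (x³ + x + 1)² is convex, its global minimum value is 0, this minimum is attained at exactly one point x* ∈ ℝ (the unique real root of x³ + x + 1), and x* is irrational. -/

import Mathlib

/-- `f(x) = (x³ + x + 1)²` is convex, its global minimum value is `0`,
it is attained at exactly one point `x*` (the unique real root of `x³ + x + 1`),
and `x*` is irrational. -/
theorem sextic_irrational_unique_minimizer (f : ℝ → ℝ)
    (hf : ∀ x, f x = (x ^ 3 + x + 1) ^ 2) :
    ConvexOn ℝ Set.univ f ∧
    (∀ x, 0 ≤ f x) ∧
    ∃ xstar : ℝ,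
      f xstar = 0 ∧
      (∀ y, f y = 0 → y = xstar) ∧
      xstar ^ 3 + xstar + 1 = 0 ∧
      (∀ y : ℝ, y ^ 3 + y + 1 = 0 → y = xstar) ∧
      Irrational xstar := by
  have hfe : f = fun x => (x ^ 3 + x + 1) ^ 2 := funext hf
  subst hfe
  -- first derivative of the inner cubic
  have hg : ∀ x : ℝ, HasDerivAt (fun x : ℝ => x ^ 3 + x + 1) (3 * x ^ 2 + 1) x := by
    intro x
    have h := ((hasDerivAt_pow 3 x).add (hasDerivAt_id x)).add_const 1
    simpa [Pi.add_apply] using h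
  have hd1 : ∀ x : ℝ, HasDerivAt (fun x : ℝ => (x ^ 3 + x + 1) ^ 2)
      (2 * (x ^ 3 + x + 1) * (3 * x ^ 2 + 1)) x := by
    intro x
    have h := (hg x).pow 2
    exact h.congr_deriv (by simp)
  have hd2 : ∀ x : ℝ, HasDerivAt (fun x : ℝ => 2 * (x ^ 3 + x + 1) * (3 * x ^ 2 + 1))
      (30 * x ^ 4 + 24 * x ^ 2 + 12 * x + 2) x := by
    intro x
    have h1 : HasDerivAt (fun x : ℝ => 2 * (x ^ 3 + x + 1)) (2 * (3 * x ^ 2 + 1)) x :=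
      (hg x).const_mul 2
    have h2 : HasDerivAt (fun x : ℝ => 3 * x ^ 2 + 1) (6 * x) x := by
      have h := ((hasDerivAt_pow 2 x).const_mul 3).add_const 1
      exact (by simpa using h : HasDerivAt (fun x : ℝ => 3 * x ^ 2 + 1) _ x).congr_deriv (by ring)
    have h := h1.mul h2
    exact h.congr_deriv (by ring)
  have hmono : StrictMono (fun x : ℝ => x ^ 3 + x + 1) := by
    have h1 : StrictMono (fun x : ℝ => x ^ 3) := Odd.strictMono_pow ⟨1, by norm_num⟩
    have h2 : StrictMono (fun x : ℝ => x ^ 3 + x) := h1.add strictMono_id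
    exact h2.add_const 1
  -- root existence
  have hroot : ∃ x ∈ Set.Icc (-1 : ℝ) 0, x ^ 3 + x + 1 = 0 := by
    have hc : ContinuousOn (fun x : ℝ => x ^ 3 + x + 1) (Set.Icc (-1) 0) := by
      fun_prop
    have h := intermediate_value_Icc (by norm_num : (-1 : ℝ) ≤ 0) hc
    have h0 : (0 : ℝ) ∈ Set.Icc ((-1 : ℝ) ^ 3 + (-1) + 1) ((0 : ℝ) ^ 3 + 0 + 1) := by
      norm_num
    obtain ⟨x, hx, hx0⟩ := h h0
    exact ⟨x, hx, hx0⟩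
  obtain ⟨xstar, _, hxstar⟩ := hroot
  refine ⟨?_, fun x => sq_nonneg _, xstar, by show (xstar ^ 3 + xstar + 1) ^ 2 = 0; rw [hxstar]; norm_num, ?_, hxstar, ?_, ?_⟩
  · -- convexity
    refine convexOn_of_hasDerivWithinAt2_nonneg convex_univ (by fun_prop)
      (f' := fun x => 2 * (x ^ 3 + x + 1) * (3 * x ^ 2 + 1))
      (f'' := fun x => 30 * x ^ 4 + 24 * x ^ 2 + 12 * x + 2)
      (fun x _ => (hd1 x).hasDerivWithinAt) (fun x _ => (hd2 x).hasDerivWithinAt) ?_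
    intro x _
    nlinarith [sq_nonneg x, sq_nonneg (x ^ 2), sq_nonneg (3 * x + 1)]
  · -- uniqueness of minimizer
    intro y hy
    have hy' : (y ^ 3 + y + 1) ^ 2 = 0 := hy
    have h0 : y ^ 3 + y + 1 = 0 := by
      have := pow_eq_zero_iff (n := 2) (by norm_num) |>.mp hy'
      exact this
    exact hmono.injective (show y ^ 3 + y + 1 = xstar ^ 3 + xstar + 1 by rw [h0, hxstar])
  · -- uniqueness of root
    intro y hy
    exact hmono.injective (show y ^ 3 + y + 1 = xstar ^ 3 + xstar + 1 by rw [hy, hxstar])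
  · -- irrationality
    rintro ⟨q, rfl⟩
    have hq : (q : ℝ) ^ 3 + (q : ℝ) + 1 = 0 := hxstar
    have hq' : q ^ 3 + q + 1 = 0 := by exact_mod_cast hq
    set n : ℤ := q.num with hn
    set d : ℤ := (q.den : ℤ) with hd
    have hd0 : (0 : ℤ) < d := by positivity
    have hqeq : (q : ℚ) = (n : ℚ) / (d : ℚ) := by
      rw [hn, hd]; exact_mod_cast (Rat.num_div_den q).symm
    have hdq0 : (d : ℚ) ≠ 0 := by positivity
    have hint : n ^ 3 + n * d ^ 2 + d ^ 3 = 0 := by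
      have : (n : ℚ) ^ 3 + (n : ℚ) * (d : ℚ) ^ 2 + (d : ℚ) ^ 3 = 0 := by
        have h := hq'
        rw [hqeq] at h
        field_simp at h
        have h2 : (d : ℚ) * ((n : ℚ) ^ 3 + (n : ℚ) * (d : ℚ) ^ 2 + (d : ℚ) ^ 3) = 0 := by
          linear_combination (d : ℚ) * h
        exact (mul_eq_zero.mp h2).resolve_left hdq0
      exact_mod_cast this
    -- d divides n^3
    have hdvd : d ∣ n ^ 3 := ⟨-(n * d + d ^ 2), by linear_combination hint⟩
    have hcop : IsCoprime n d := by
      rw [Int.isCoprime_iff_gcd_eq_one]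
      exact_mod_cast q.reduced
    have hunit : IsUnit d := (IsCoprime.pow_left (m := 3) hcop).isUnit_of_dvd' hdvd dvd_rfl
    have hd1' : d = 1 := by
      rcases Int.isUnit_iff.mp hunit with h | h
      · exact h
      · omega
    have hn3 : n ^ 3 + n + 1 = 0 := by
      rw [hd1'] at hint; linarith
    rcases le_or_gt 0 n with h | h
    · nlinarith [pow_nonneg h 3]
    · have hn1 : n ≤ -1 := by omega
      nlinarith [sq_nonneg n, sq_nonneg (n + 1)]
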